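/- Let C be a strongly subadditive capacity, i.e., C(E₁ ∪ E₂) + C(E₁ ∩ E₂) ≤ C(E₁) + C(E₂) for all sets E₁, E₂, which is also monotone with C(∅)=0. Then the Choquet integral functional w ↦ ∫₀^∞ C({w > t}) dt is subadditive on nonnegative functions: ∫(w₁+w₂) dC ≤ ∫w₁ dC + ∫w₂ dC. -/

import Mathlib

open MeasureTheory Set ENNReal Filter

private noncomputable def chT {X : Type*} (C : Set X → ℝ≥0∞) (f : X → ℕ) : ℝ≥0∞ :=
  ∑' j : ℕ, C {x | j + 1 ≤ f x}

private lemma chStep {X : Type*} (C : Set X → ℝ≥0∞)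
    (hstrong : ∀ E₁ E₂ : Set X, C (E₁ ∪ E₂) + C (E₁ ∩ E₂) ≤ C E₁ + C E₂)
    (f : X → ℕ) (B : Set X) (N : ℕ) :
    (∑ j ∈ Finset.range N, C {x | j + 1 ≤ f x + B.indicator 1 x}) + C ({x | N ≤ f x} ∩ B)
      ≤ (∑ j ∈ Finset.range N, C {x | j + 1 ≤ f x}) + C B := by
  induction N with
  | zero =>
    simp only [Finset.range_zero, Finset.sum_empty, zero_add]
    have h0 : {x : X | 0 ≤ f x} = Set.univ := by ext x; simp
    rw [h0, Set.univ_inter]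
  | succ N ih =>
    have hset : {x | N + 1 ≤ f x + B.indicator 1 x}
        = {x | N + 1 ≤ f x} ∪ ({x | N ≤ f x} ∩ B) := by
      ext x
      by_cases hx : x ∈ B
      · simp only [Set.mem_setOf_eq, Set.mem_union, Set.mem_inter_iff, hx, and_true,
          Set.indicator_of_mem hx, Pi.one_apply]
        omega
      · simp only [Set.mem_setOf_eq, Set.mem_union, Set.mem_inter_iff, hx, and_false,
          Set.indicator_of_notMem hx, add_zero, or_false]
    have hinter : {x : X | N + 1 ≤ f x} ∩ ({x | N ≤ f x} ∩ B)
        = {x | N + 1 ≤ f x} ∩ B := by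
      ext x
      simp only [Set.mem_inter_iff, Set.mem_setOf_eq]
      constructor
      · rintro ⟨h1, _, h3⟩; exact ⟨h1, h3⟩
      · rintro ⟨h1, h3⟩; exact ⟨h1, by omega, h3⟩
    have key := hstrong {x | N + 1 ≤ f x} ({x | N ≤ f x} ∩ B)
    rw [hinter] at key
    rw [Finset.sum_range_succ, Finset.sum_range_succ, hset]
    calc (∑ j ∈ Finset.range N, C {x | j + 1 ≤ f x + B.indicator 1 x})
          + C ({x | N + 1 ≤ f x} ∪ ({x | N ≤ f x} ∩ B)) + C ({x | N + 1 ≤ f x} ∩ B)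
        = (∑ j ∈ Finset.range N, C {x | j + 1 ≤ f x + B.indicator 1 x})
          + (C ({x | N + 1 ≤ f x} ∪ ({x | N ≤ f x} ∩ B)) + C ({x | N + 1 ≤ f x} ∩ B)) := by
          ring
      _ ≤ (∑ j ∈ Finset.range N, C {x | j + 1 ≤ f x + B.indicator 1 x})
          + (C {x | N + 1 ≤ f x} + C ({x | N ≤ f x} ∩ B)) := add_le_add_right key _
      _ = ((∑ j ∈ Finset.range N, C {x | j + 1 ≤ f x + B.indicator 1 x})
          + C ({x | N ≤ f x} ∩ B)) + C {x | N + 1 ≤ f x} := by ring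
      _ ≤ ((∑ j ∈ Finset.range N, C {x | j + 1 ≤ f x}) + C B) + C {x | N + 1 ≤ f x} :=
          add_le_add_left ih _
      _ = (∑ j ∈ Finset.range N, C {x | j + 1 ≤ f x}) + C {x | N + 1 ≤ f x} + C B := by ring

private lemma chStep' {X : Type*} (C : Set X → ℝ≥0∞)
    (hstrong : ∀ E₁ E₂ : Set X, C (E₁ ∪ E₂) + C (E₁ ∩ E₂) ≤ C E₁ + C E₂)
    (f : X → ℕ) (B : Set X) :
    chT C (fun x => f x + B.indicator 1 x) ≤ chT C f + C B := by
  rw [chT, ENNReal.tsum_eq_iSup_nat]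
  refine iSup_le fun N => ?_
  calc (∑ j ∈ Finset.range N, C {x | j + 1 ≤ f x + B.indicator 1 x})
      ≤ (∑ j ∈ Finset.range N, C {x | j + 1 ≤ f x + B.indicator 1 x})
        + C ({x | N ≤ f x} ∩ B) := le_self_add
    _ ≤ (∑ j ∈ Finset.range N, C {x | j + 1 ≤ f x}) + C B := chStep C hstrong f B N
    _ ≤ chT C f + C B := add_le_add_left (ENNReal.sum_le_tsum _) _
private lemma chBounded {X : Type*} (C : Set X → ℝ≥0∞)
    (hmono : ∀ E₁ E₂ : Set X, E₁ ⊆ E₂ → C E₁ ≤ C E₂)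
    (hempty : C ∅ = 0)
    (hstrong : ∀ E₁ E₂ : Set X, C (E₁ ∪ E₂) + C (E₁ ∩ E₂) ≤ C E₁ + C E₂) :
    ∀ (m : ℕ) (f g : X → ℕ), (∀ x, g x ≤ m) →
      chT C (fun x => f x + g x) ≤ chT C f + chT C g := by
  intro m
  induction m with
  | zero =>
    intro f g hg
    have hfg : (fun x => f x + g x) = fun x => f x := by
      funext x; have := hg x; omega
    rw [hfg]
    exact le_add_right le_rfl
  | succ m ih =>
    intro f g hg
    set g' : X → ℕ := fun x => min (g x) m with hg'
    set B : Set X := {x | m + 1 ≤ g x} with hB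
    have hdecomp : ∀ x, g x = g' x + B.indicator 1 x := by
      intro x
      by_cases hx : x ∈ B
      · have hx' : m + 1 ≤ g x := hx
        rw [Set.indicator_of_mem hx]
        have := hg x
        simp only [hg', Pi.one_apply]
        omega
      · have hx' : ¬ (m + 1 ≤ g x) := hx
        rw [Set.indicator_of_notMem hx]
        simp only [hg']
        omega
    have h1 : chT C (fun x => f x + g x)
        = chT C (fun x => (f x + g' x) + B.indicator 1 x) := by
      congr 1
      funext x
      rw [hdecomp x, add_assoc]
    have h2 := chStep' C hstrong (fun x => f x + g' x) B
    have h3 := ih f g' (fun x => min_le_right _ _)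
    have h4 : chT C g' + C B ≤ chT C g := by
      have hT' : chT C g' = ∑ j ∈ Finset.range m, C {x | j + 1 ≤ g x} := by
        rw [chT]
        rw [tsum_eq_sum (s := Finset.range m) ?_]
        · refine Finset.sum_congr rfl fun j hj => ?_
          have hjm : j < m := Finset.mem_range.mp hj
          congr 1
          ext x
          simp only [hg', Set.mem_setOf_eq]
          omega
        · intro j hj
          have hjm : m ≤ j := by
            by_contra hc
            exact hj (Finset.mem_range.mpr (not_le.mp hc))
          have hE : {x : X | j + 1 ≤ g' x} = ∅ := by
            ext x
            simp only [hg', Set.mem_setOf_eq, Set.mem_empty_iff_false, iff_false]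
            omega
          rw [hE, hempty]
      have hTg : ∑ j ∈ Finset.range (m + 1), C {x | j + 1 ≤ g x} ≤ chT C g :=
        ENNReal.sum_le_tsum _
      rw [Finset.sum_range_succ] at hTg
      rw [hT']
      exact hTg
    calc chT C (fun x => f x + g x)
        = chT C (fun x => (f x + g' x) + B.indicator 1 x) := h1
      _ ≤ chT C (fun x => f x + g' x) + C B := h2
      _ ≤ (chT C f + chT C g') + C B := add_le_add_left h3 _
      _ = chT C f + (chT C g' + C B) := by ring
      _ ≤ chT C f + chT C g := add_le_add_right h4 _

private lemma chAdd {X : Type*} (C : Set X → ℝ≥0∞)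
    (hmono : ∀ E₁ E₂ : Set X, E₁ ⊆ E₂ → C E₁ ≤ C E₂)
    (hempty : C ∅ = 0)
    (hstrong : ∀ E₁ E₂ : Set X, C (E₁ ∪ E₂) + C (E₁ ∩ E₂) ≤ C E₁ + C E₂)
    (f g : X → ℕ) :
    chT C (fun x => f x + g x) ≤ chT C f + chT C g := by
  rw [chT, ENNReal.tsum_eq_iSup_nat]
  refine iSup_le fun N => ?_
  have step1 : ∑ j ∈ Finset.range N, C {x | j + 1 ≤ f x + g x}
      ≤ ∑ j ∈ Finset.range N, C {x | j + 1 ≤ min (f x) N + min (g x) N} := by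
    refine Finset.sum_le_sum fun j hj => hmono _ _ fun x hx => ?_
    have hjN : j < N := Finset.mem_range.mp hj
    simp only [Set.mem_setOf_eq] at hx ⊢
    omega
  have step2 : (∑ j ∈ Finset.range N, C {x | j + 1 ≤ min (f x) N + min (g x) N})
      ≤ chT C (fun x => min (f x) N + min (g x) N) := ENNReal.sum_le_tsum _
  have step3 := chBounded C hmono hempty hstrong N (fun x => min (f x) N)
    (fun x => min (g x) N) (fun x => min_le_right _ _)
  have step4 : chT C (fun x => min (f x) N) ≤ chT C f := by
    refine ENNReal.tsum_le_tsum fun j => hmono _ _ fun x hx => ?_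
    simp only [Set.mem_setOf_eq] at hx ⊢
    omega
  have step5 : chT C (fun x => min (g x) N) ≤ chT C g := by
    refine ENNReal.tsum_le_tsum fun j => hmono _ _ fun x hx => ?_
    simp only [Set.mem_setOf_eq] at hx ⊢
    omega
  exact (step1.trans step2).trans (step3.trans (add_le_add step4 step5))
private lemma chLower {X : Type*} (C : Set X → ℝ≥0∞)
    (hmono : ∀ E₁ E₂ : Set X, E₁ ⊆ E₂ → C E₁ ≤ C E₂)
    (w : X → ℝ) (hw : ∀ x, 0 ≤ w x) {h : ℝ} (hh : 0 < h) :
    ENNReal.ofReal h * chT C (fun x => ⌊w x / h⌋₊)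
      ≤ ∫⁻ t in Set.Ioi (0:ℝ), C {x | t < w x} := by
  have hset : ∀ j : ℕ, {x | j + 1 ≤ ⌊w x / h⌋₊} = {x | ((j:ℝ) + 1) * h ≤ w x} := by
    intro j
    ext x
    have h0 : 0 ≤ w x / h := div_nonneg (hw x) hh.le
    simp only [Set.mem_setOf_eq]
    rw [Nat.le_floor_iff h0, le_div_iff₀ hh]
    push_cast
    rfl
  have hj : ∀ j : ℕ, ENNReal.ofReal h * C {x | j + 1 ≤ ⌊w x / h⌋₊}
      ≤ ∫⁻ t in Set.Ioo ((j:ℝ) * h) (((j:ℝ) + 1) * h), C {x | t < w x} := by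
    intro j
    have hvol : volume (Set.Ioo ((j:ℝ) * h) (((j:ℝ) + 1) * h)) = ENNReal.ofReal h := by
      rw [Real.volume_Ioo]
      congr 1
      ring
    calc ENNReal.ofReal h * C {x | j + 1 ≤ ⌊w x / h⌋₊}
        = ∫⁻ _ in Set.Ioo ((j:ℝ) * h) (((j:ℝ) + 1) * h), C {x | j + 1 ≤ ⌊w x / h⌋₊} := by
          rw [setLIntegral_const, hvol, mul_comm]
      _ ≤ ∫⁻ t in Set.Ioo ((j:ℝ) * h) (((j:ℝ) + 1) * h), C {x | t < w x} := by
          refine setLIntegral_mono' measurableSet_Ioo fun t ht => ?_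
          rw [hset j]
          exact hmono _ _ fun x hx => lt_of_lt_of_le ht.2 hx
  have hdisjkey : ∀ i j : ℕ, i < j →
      Disjoint (Set.Ioo ((i:ℝ) * h) (((i:ℝ) + 1) * h))
        (Set.Ioo ((j:ℝ) * h) (((j:ℝ) + 1) * h)) := by
    intro i j hij
    refine Set.disjoint_left.mpr ?_
    rintro t ⟨_, h2⟩ ⟨h3, _⟩
    have hij' : ((i:ℝ) + 1) ≤ (j:ℝ) := by exact_mod_cast hij
    nlinarith
  have hdisj : Pairwise (Function.onFun Disjoint
      fun j : ℕ => Set.Ioo ((j:ℝ) * h) (((j:ℝ) + 1) * h)) := by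
    intro i j hij
    rcases hij.lt_or_gt with hlt | hlt
    · exact hdisjkey i j hlt
    · exact (hdisjkey j i hlt).symm
  have hUsub : (⋃ j : ℕ, Set.Ioo ((j:ℝ) * h) (((j:ℝ) + 1) * h)) ⊆ Set.Ioi (0:ℝ) := by
    rintro t ht
    obtain ⟨j, hj1, _⟩ := Set.mem_iUnion.mp ht
    have : (0:ℝ) ≤ (j:ℝ) * h := mul_nonneg (Nat.cast_nonneg j) hh.le
    exact lt_of_le_of_lt this hj1
  calc ENNReal.ofReal h * chT C (fun x => ⌊w x / h⌋₊)
      = ∑' j : ℕ, ENNReal.ofReal h * C {x | j + 1 ≤ ⌊w x / h⌋₊} := by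
        rw [chT, ENNReal.tsum_mul_left]
    _ ≤ ∑' j : ℕ, ∫⁻ t in Set.Ioo ((j:ℝ) * h) (((j:ℝ) + 1) * h), C {x | t < w x} :=
        ENNReal.tsum_le_tsum hj
    _ = ∫⁻ t in ⋃ j : ℕ, Set.Ioo ((j:ℝ) * h) (((j:ℝ) + 1) * h), C {x | t < w x} := by
        rw [Measure.restrict_iUnion hdisj fun j => measurableSet_Ioo, lintegral_sum_measure]
    _ ≤ ∫⁻ t in Set.Ioi (0:ℝ), C {x | t < w x} :=
        lintegral_mono' (Measure.restrict_mono hUsub le_rfl) le_rfl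

private lemma chKey {X : Type*} (C : Set X → ℝ≥0∞)
    (hmono : ∀ E₁ E₂ : Set X, E₁ ⊆ E₂ → C E₁ ≤ C E₂)
    (hempty : C ∅ = 0)
    (hstrong : ∀ E₁ E₂ : Set X, C (E₁ ∪ E₂) + C (E₁ ∩ E₂) ≤ C E₁ + C E₂)
    (w₁ w₂ : X → ℝ) (hw₁ : ∀ x, 0 ≤ w₁ x) (hw₂ : ∀ x, 0 ≤ w₂ x)
    {h : ℝ} (hh : 0 < h) :
    ∫⁻ t in Set.Ioi (2 * h), C {x | t < w₁ x + w₂ x}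
      ≤ (∫⁻ t in Set.Ioi (0:ℝ), C {x | t < w₁ x})
        + ∫⁻ t in Set.Ioi (0:ℝ), C {x | t < w₂ x} := by
  set f : X → ℕ := fun x => ⌊w₁ x / h⌋₊ with hf
  set g : X → ℕ := fun x => ⌊w₂ x / h⌋₊ with hg
  have hcover : Set.Ioi (2 * h) ⊆ ⋃ k : ℕ, Set.Ioc (((k:ℝ) + 2) * h) (((k:ℝ) + 3) * h) := by
    intro t ht
    simp only [Set.mem_Ioi] at ht
    have hs : 0 < t - 2 * h := by linarith
    set n := ⌈(t - 2 * h) / h⌉₊ with hn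
    have hn1 : 1 ≤ n := Nat.one_le_ceil_iff.mpr (div_pos hs hh)
    refine Set.mem_iUnion.mpr ⟨n - 1, ?_⟩
    have hc1 : ((n - 1 : ℕ) : ℝ) < (t - 2 * h) / h := Nat.lt_ceil.mp (by omega)
    have hc2 : (t - 2 * h) / h ≤ ((n - 1 : ℕ) : ℝ) + 1 := by
      have h1 := Nat.le_ceil ((t - 2 * h) / h)
      have h2 : ((n - 1 : ℕ) : ℝ) + 1 = (n : ℝ) := by
        rw [Nat.cast_sub hn1]
        push_cast
        ring
      rw [h2]
      exact h1
    have hlt : ((n - 1 : ℕ) : ℝ) * h < t - 2 * h := (lt_div_iff₀ hh).mp hc1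
    have hle : t - 2 * h ≤ (((n - 1 : ℕ) : ℝ) + 1) * h := (div_le_iff₀ hh).mp hc2
    rw [Set.mem_Ioc]
    exact ⟨by nlinarith, by nlinarith⟩
  have hIoc : ∀ k : ℕ, (∫⁻ t in Set.Ioc (((k:ℝ) + 2) * h) (((k:ℝ) + 3) * h),
        C {x | t < w₁ x + w₂ x})
      ≤ ENNReal.ofReal h * C {x | k + 1 ≤ f x + g x} := by
    intro k
    have hvol : volume (Set.Ioc (((k:ℝ) + 2) * h) (((k:ℝ) + 3) * h)) = ENNReal.ofReal h := by
      rw [Real.volume_Ioc]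
      congr 1
      ring
    calc (∫⁻ t in Set.Ioc (((k:ℝ) + 2) * h) (((k:ℝ) + 3) * h), C {x | t < w₁ x + w₂ x})
        ≤ ∫⁻ _ in Set.Ioc (((k:ℝ) + 2) * h) (((k:ℝ) + 3) * h),
            C {x | k + 1 ≤ f x + g x} := by
          refine setLIntegral_mono' measurableSet_Ioc fun t ht => ?_
          refine hmono _ _ fun x hx => ?_
          simp only [Set.mem_setOf_eq] at hx ⊢
          have h1 : ((k:ℝ) + 2) * h < w₁ x + w₂ x := lt_trans ht.1 hx
          have hf1 : w₁ x < ((f x : ℝ) + 1) * h := by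
            have hfl := Nat.lt_floor_add_one (w₁ x / h)
            have := (mul_lt_mul_of_pos_right hfl hh)
            rwa [div_mul_cancel₀ _ (ne_of_gt hh)] at this
          have hf2 : w₂ x < ((g x : ℝ) + 1) * h := by
            have hfl := Nat.lt_floor_add_one (w₂ x / h)
            have := (mul_lt_mul_of_pos_right hfl hh)
            rwa [div_mul_cancel₀ _ (ne_of_gt hh)] at this
          have hklt : (k : ℝ) < ((f x : ℝ) + (g x : ℝ)) := by nlinarith
          have : (k : ℝ) < ((f x + g x : ℕ) : ℝ) := by push_cast; linarith
          have := Nat.cast_lt.mp this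
          omega
      _ = ENNReal.ofReal h * C {x | k + 1 ≤ f x + g x} := by
          rw [setLIntegral_const, hvol, mul_comm]
  calc ∫⁻ t in Set.Ioi (2 * h), C {x | t < w₁ x + w₂ x}
      ≤ ∫⁻ t in ⋃ k : ℕ, Set.Ioc (((k:ℝ) + 2) * h) (((k:ℝ) + 3) * h),
          C {x | t < w₁ x + w₂ x} :=
        lintegral_mono' (Measure.restrict_mono hcover le_rfl) le_rfl
    _ ≤ ∑' k : ℕ, ∫⁻ t in Set.Ioc (((k:ℝ) + 2) * h) (((k:ℝ) + 3) * h),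
          C {x | t < w₁ x + w₂ x} := lintegral_iUnion_le _ _
    _ ≤ ∑' k : ℕ, ENNReal.ofReal h * C {x | k + 1 ≤ f x + g x} :=
        ENNReal.tsum_le_tsum hIoc
    _ = ENNReal.ofReal h * chT C (fun x => f x + g x) := by
        rw [chT, ENNReal.tsum_mul_left]
    _ ≤ ENNReal.ofReal h * (chT C f + chT C g) :=
        mul_le_mul_right (chAdd C hmono hempty hstrong f g) _
    _ = ENNReal.ofReal h * chT C f + ENNReal.ofReal h * chT C g := mul_add _ _ _
    _ ≤ (∫⁻ t in Set.Ioi (0:ℝ), C {x | t < w₁ x})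
        + ∫⁻ t in Set.Ioi (0:ℝ), C {x | t < w₂ x} :=
        add_le_add (chLower C hmono w₁ hw₁ hh) (chLower C hmono w₂ hw₂ hh)
/-- Choquet's theorem: if a monotone capacity `C` with `C ∅ = 0` is strongly subadditive,
then the Choquet integral is subadditive on nonnegative functions. -/
theorem choquet_triangle_of_stronglySubadditive {X : Type*} (C : Set X → ℝ≥0∞)
    (hmono : ∀ E₁ E₂ : Set X, E₁ ⊆ E₂ → C E₁ ≤ C E₂)
    (hempty : C ∅ = 0)
    (hstrong : ∀ E₁ E₂ : Set X, C (E₁ ∪ E₂) + C (E₁ ∩ E₂) ≤ C E₁ + C E₂)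
    (w₁ w₂ : X → ℝ) (hw₁ : ∀ x, 0 ≤ w₁ x) (hw₂ : ∀ x, 0 ≤ w₂ x) :
    ∫⁻ t in Set.Ioi (0:ℝ), C {x | t < w₁ x + w₂ x}
      ≤ ∫⁻ t in Set.Ioi (0:ℝ), C {x | t < w₁ x}
        + ∫⁻ t in Set.Ioi (0:ℝ), C {x | t < w₂ x} := by
  set φ : ℝ → ℝ≥0∞ := fun t => C {x | t < w₁ x + w₂ x} with hφ
  have hanti : Antitone φ := fun a b hab =>
    hmono _ _ fun x hx => lt_of_le_of_lt hab hx
  have hφm : Measurable φ := hanti.measurable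
  set s : ℕ → Set ℝ := fun n => Set.Ioi (2 * (1 / ((n:ℝ) + 1))) with hs
  have hmonoset : Monotone fun n : ℕ => (s n).indicator φ := by
    intro a b hab
    refine Set.indicator_le_indicator_of_subset ?_ (fun t => zero_le)
    apply Set.Ioi_subset_Ioi
    have ha : (0:ℝ) < (a:ℝ) + 1 := by positivity
    have hb : (0:ℝ) < (b:ℝ) + 1 := by positivity
    gcongr
  have hsup : ∀ t : ℝ, (Set.Ioi (0:ℝ)).indicator φ t = ⨆ n, (s n).indicator φ t := by
    intro t
    by_cases ht : t ∈ Set.Ioi (0:ℝ)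
    · rw [Set.indicator_of_mem ht]
      have ht' : 0 < t := ht
      apply le_antisymm
      · obtain ⟨n, hn⟩ := exists_nat_gt (2 / t)
        have h2 : 2 * (1 / ((n:ℝ) + 1)) < t := by
          have hn1 : (0:ℝ) < (n:ℝ) + 1 := by positivity
          rw [div_lt_iff₀ ht'] at hn
          rw [mul_one_div, div_lt_iff₀ hn1]
          nlinarith
        have hmem : t ∈ s n := h2
        exact le_iSup_of_le n (le_of_eq (Set.indicator_of_mem hmem φ).symm)
      · exact iSup_le fun n => Set.indicator_apply_le fun _ => le_rfl
    · rw [Set.indicator_of_notMem ht]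
      have hz : ∀ n : ℕ, (s n).indicator φ t = 0 := by
        intro n
        apply Set.indicator_of_notMem
        simp only [hs, Set.mem_Ioi, not_lt]
        have h1 : (0:ℝ) < 2 * (1 / ((n:ℝ) + 1)) := by positivity
        have h2 : t ≤ 0 := not_lt.mp ht
        linarith
      simp [hz]
  have hIn : ∀ n : ℕ, (∫⁻ t in s n, φ t)
      ≤ (∫⁻ t in Set.Ioi (0:ℝ), C {x | t < w₁ x})
        + ∫⁻ t in Set.Ioi (0:ℝ), C {x | t < w₂ x} := by
    intro n
    exact chKey C hmono hempty hstrong w₁ w₂ hw₁ hw₂ (by positivity : (0:ℝ) < 1 / ((n:ℝ) + 1))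
  calc ∫⁻ t in Set.Ioi (0:ℝ), φ t
      = ∫⁻ t, (Set.Ioi (0:ℝ)).indicator φ t := (lintegral_indicator measurableSet_Ioi φ).symm
    _ = ∫⁻ t, ⨆ n, (s n).indicator φ t := lintegral_congr hsup
    _ = ⨆ n, ∫⁻ t, (s n).indicator φ t :=
        lintegral_iSup (fun n => hφm.indicator measurableSet_Ioi) hmonoset
    _ = ⨆ n, ∫⁻ t in s n, φ t := by
        refine iSup_congr fun n => ?_
        exact lintegral_indicator measurableSet_Ioi φ
    _ ≤ (∫⁻ t in Set.Ioi (0:ℝ), C {x | t < w₁ x})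
        + ∫⁻ t in Set.Ioi (0:ℝ), C {x | t < w₂ x} := iSup_le hIn
    _ ≤ (∫⁻ t in Set.Ioi (0:ℝ), C {x | t < w₁ x})
        + (∫⁻ t in Set.Ioi (0:ℝ), C {x | t < w₂ x}) * volume (Set.Ioi (0:ℝ)) := by
        refine add_le_add_right ?_ _
        refine le_mul_of_one_le_right zero_le ?_
        rw [Real.volume_Ioi]
        exact le_top
    _ = ∫⁻ t in Set.Ioi (0:ℝ),
          (C {x | t < w₁ x} + ∫⁻ u in Set.Ioi (0:ℝ), C {x | u < w₂ x}) := by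
        rw [lintegral_add_right _ measurable_const, setLIntegral_const]
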